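/- Let k and ℓ be integers with 1 ≤ ℓ < k/2 and let n be divisible by k−ℓ with n ≥ 3(k−ℓ). Then the number of Hamilton ℓ-cycles in the complete k-uniform hypergraph on n vertices (whose edges are all k-element subsets of the vertex set) equals (n−1)! · (k−ℓ)/2 · (ℓ! · (k−2ℓ)!)^{−n/(k−ℓ)}. -/

import Mathlib

open Finset Equiv Function

set_option linter.unusedSectionVars false

namespace Ham2

noncomputable def permFiberEquiv {α β : Type*} [Fintype α] [DecidableEq α] [DecidableEq β]
    (c : α → β) :
    {τ : Equiv.Perm α // ∀ x, c (τ x) = c x} ≃ ∀ b : β, Equiv.Perm {x : α // c x = b} where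
  toFun τ b := Equiv.subtypeEquiv τ.1 (fun x => by
    constructor
    · intro h; rw [τ.2 x]; exact h
    · intro h; rw [← τ.2 x]; exact h)
  invFun F := by
    have key : ∀ (b : β) (x : α) (hx : c x = b),
        ((F (c x) ⟨x, rfl⟩ : {z // c z = c x}) : α) = ((F b ⟨x, hx⟩ : {z // c z = b}) : α) := by
      intro b x hx
      subst hx
      rfl
    have hinj : Function.Injective
        (fun x : α => ((F (c x) ⟨x, rfl⟩ : {y // c y = c x}) : α)) := by
      intro x y h
      simp only [] at h
      have hx : c x = c y := by
        have h1 := (F (c x) ⟨x, rfl⟩).2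
        have h2 := (F (c y) ⟨y, rfl⟩).2
        rw [h] at h1
        exact h1.symm.trans h2
      rw [key (c x) y hx.symm] at h
      have := (F (c x)).injective (Subtype.ext h)
      exact congrArg Subtype.val this
    refine ⟨Equiv.ofBijective _ (Finite.injective_iff_bijective.mp hinj), fun x => ?_⟩
    exact (F (c x) ⟨x, rfl⟩).2
  left_inv := by
    intro τ
    apply Subtype.ext
    apply Equiv.ext
    intro x
    rfl
  right_inv := by
    intro F
    funext b
    apply Equiv.ext
    intro x
    obtain ⟨x, hx⟩ := x
    apply Subtype.ext
    show ((F (c x) ⟨x, rfl⟩ : {z // c z = c x}) : α) = _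
    have : ∀ (b : β) (hx : c x = b),
        ((F (c x) ⟨x, rfl⟩ : {z // c z = c x}) : α) = ((F b ⟨x, hx⟩ : {z // c z = b}) : α) := by
      intro b hx
      subst hx
      rfl
    exact this b hx
  
lemma card_perm_fiber {α β : Type*} [Fintype α] [DecidableEq α] [Fintype β] [DecidableEq β]
    (c : α → β) :
    Fintype.card {τ : Equiv.Perm α // ∀ x, c (τ x) = c x}
      = ∏ b : β, (Fintype.card {x : α // c x = b}).factorial := by
  rw [Fintype.card_congr (permFiberEquiv c), Fintype.card_pi]
  congr 1
  funext b
  rw [Fintype.card_perm]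

end Ham2

namespace HamCount

variable (m d l : ℕ) [NeZero m] [NeZero d]

def Rl : Finset (ZMod d) := univ.filter (fun r => r.val < l)
def Rm : Finset (ZMod d) := univ.filter (fun r => l ≤ r.val)

def Bc (t : ZMod m) : Finset (ZMod m × ZMod d) := ({t} ×ˢ univ) ∪ ({t+1} ×ˢ Rl d l)
def Lc (t : ZMod m) : Finset (ZMod m × ZMod d) := {t+1} ×ˢ Rl d l
def Mc (t : ZMod m) : Finset (ZMod m × ZMod d) := {t} ×ˢ Rm d l

variable {m d l}

lemma mem_Bc {x : ZMod m × ZMod d} {t : ZMod m} :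
    x ∈ Bc m d l t ↔ x.1 = t ∨ (x.1 = t + 1 ∧ x.2.val < l) := by
  obtain ⟨s, r⟩ := x
  simp only [Bc, Rl, Finset.mem_union, Finset.mem_product, Finset.mem_singleton,
    Finset.mem_univ, Finset.mem_filter, true_and, and_true]

lemma mem_Lc {x : ZMod m × ZMod d} {t : ZMod m} :
    x ∈ Lc m d l t ↔ x.1 = t + 1 ∧ x.2.val < l := by
  obtain ⟨s, r⟩ := x
  simp only [Lc, Rl, Finset.mem_product, Finset.mem_singleton, Finset.mem_filter,
    Finset.mem_univ, true_and]

lemma mem_Mc {x : ZMod m × ZMod d} {t : ZMod m} :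
    x ∈ Mc m d l t ↔ x.1 = t ∧ l ≤ x.2.val := by
  obtain ⟨s, r⟩ := x
  simp only [Mc, Rm, Finset.mem_product, Finset.mem_singleton, Finset.mem_filter,
    Finset.mem_univ, true_and]

section facts
variable (hm : 3 ≤ m) (hl1 : 1 ≤ l) (hld : l < d)

include hm in
lemma one_ne_zero' : (1 : ZMod m) ≠ 0 := by
  have : ((1 : ℕ) : ZMod m) ≠ 0 := by
    rw [Ne, ZMod.natCast_eq_zero_iff, Nat.dvd_one]
    omega
  simpa using this

include hm in
lemma two_ne_zero' : (2 : ZMod m) ≠ 0 := by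
  have : ((2 : ℕ) : ZMod m) ≠ 0 := by
    rw [Ne, ZMod.natCast_eq_zero_iff]
    intro h
    have := Nat.le_of_dvd (by norm_num) h
    omega
  simpa using this

include hm in
lemma ne_add_one (t : ZMod m) : t ≠ t + 1 := by
  intro h
  exact one_ne_zero' hm (by linear_combination -h)

include hm in
lemma ne_add_two (t : ZMod m) : t ≠ t + 2 := by
  intro h
  exact two_ne_zero' hm (by linear_combination -h)

include hl1 in
lemma Lc_nonempty (t : ZMod m) : (Lc m d l t).Nonempty := by
  refine ⟨(t + 1, 0), ?_⟩
  rw [mem_Lc]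
  refine ⟨rfl, ?_⟩
  rw [ZMod.val_zero]
  omega

include hm in
lemma Bc_inter_adj (t : ZMod m) : Bc m d l t ∩ Bc m d l (t + 1) = Lc m d l t := by
  ext x
  simp only [Finset.mem_inter, mem_Bc, mem_Lc]
  constructor
  · rintro ⟨h1 | ⟨h1, hr⟩, h2 | ⟨h2, hr2⟩⟩
    · exact absurd (h1.symm.trans h2) (ne_add_one hm t)
    · refine absurd (h1.symm.trans h2) ?_
      have h := ne_add_two hm t
      rwa [show (2:ZMod m) = 1+1 by norm_num, ← add_assoc] at h
    · exact ⟨h2, ‹_›⟩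
    · exact ⟨h1, hr⟩
  · rintro ⟨h1, h2⟩
    exact ⟨Or.inr ⟨h1, h2⟩, Or.inl h1⟩

lemma Bc_inter_cases {a b : ZMod m} (h : (Bc m d l a ∩ Bc m d l b).Nonempty)
    (hab : a ≠ b) : b = a + 1 ∨ a = b + 1 := by
  obtain ⟨x, hx⟩ := h
  rw [Finset.mem_inter, mem_Bc, mem_Bc] at hx
  obtain ⟨h1 | ⟨h1, -⟩, h2 | ⟨h2, -⟩⟩ := hx
  · exact absurd (h1.symm.trans h2) hab
  · right; rw [← h2, h1]
  · left; rw [← h1, h2]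
  · exact absurd (by linear_combination h1.symm.trans h2) hab

include hld in
lemma Bc_injective : Function.Injective (Bc m d l) := by
  intro t t' h
  have hval : ((l : ℕ) : ZMod d).val = l := ZMod.val_cast_of_lt hld
  have hmem : (t, ((l : ℕ) : ZMod d)) ∈ Bc m d l t := by
    rw [mem_Bc]; left; rfl
  rw [h, mem_Bc] at hmem
  rcases hmem with h1 | ⟨-, h2⟩
  · exact h1
  · rw [hval] at h2; omega

include hl1 in
lemma Lc_injective : Function.Injective (Lc m d l) := by
  intro t t' h
  obtain ⟨x, hx⟩ := Lc_nonempty (m := m) (d := d) hl1 t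
  have hx' := hx
  rw [h] at hx'
  rw [mem_Lc] at hx hx'
  have := hx.1.symm.trans hx'.1
  linear_combination this

lemma Bc_eq_union (t : ZMod m) :
    Bc m d l t = Lc m d l (t - 1) ∪ Mc m d l t ∪ Lc m d l t := by
  ext x
  simp only [Finset.mem_union, mem_Bc, mem_Lc, mem_Mc, sub_add_cancel]
  constructor
  · rintro (h | ⟨h1, h2⟩)
    · by_cases hc : x.2.val < l
      · exact Or.inl (Or.inl ⟨h, hc⟩)
      · exact Or.inl (Or.inr ⟨h, by omega⟩)
    · exact Or.inr ⟨h1, h2⟩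
  · rintro ((⟨h1, h2⟩ | ⟨h1, h2⟩) | ⟨h1, h2⟩)
    · exact Or.inl h1
    · exact Or.inl h1
    · exact Or.inr ⟨h1, h2⟩

include hm in
lemma Mc_eq (t : ZMod m) :
    Mc m d l t = Bc m d l t \ (Lc m d l (t - 1) ∪ Lc m d l t) := by
  ext x
  simp only [Finset.mem_sdiff, Finset.mem_union, mem_Bc, mem_Lc, mem_Mc, sub_add_cancel]
  constructor
  · rintro ⟨h1, h2⟩
    refine ⟨Or.inl h1, ?_⟩
    push_neg
    constructor
    · rintro -; omega
    · rintro h; exact absurd (h1.symm.trans h) (ne_add_one hm t)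
  · rintro ⟨h | ⟨h1, h2⟩, hn⟩
    · push_neg at hn
      exact ⟨h, by have := hn.1 h; omega⟩
    · push_neg at hn
      exact absurd h2 (not_lt.mpr (hn.2 h1))

end facts

section dihedral

def pmap (p : ZMod m × Bool) (t : ZMod m) : ZMod m := if p.2 then p.1 + t else p.1 - t
def rmap (p : ZMod m × Bool) (t : ZMod m) : ZMod m := if p.2 then p.1 + t else p.1 - t - 1

lemma pmap_true (a t : ZMod m) : pmap (a, true) t = a + t := rfl
lemma pmap_false (a t : ZMod m) : pmap (a, false) t = a - t := by simp [pmap]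
lemma rmap_true (a t : ZMod m) : rmap (a, true) t = a + t := rfl
lemma rmap_false (a t : ZMod m) : rmap (a, false) t = a - t - 1 := by simp [rmap]

lemma pmap_injective (p : ZMod m × Bool) : Function.Injective (pmap p) := by
  rcases p with ⟨a, ε⟩
  intro t t' h
  cases ε <;> simp only [pmap, Bool.false_eq_true, if_true, if_false] at h
  · linear_combination -h
  · exact add_left_cancel h

lemma image_pmap_univ (p : ZMod m × Bool) : Finset.image (pmap p) univ = univ := by
  apply Finset.image_univ_of_surjective
  exact Finite.injective_iff_surjective.mp (pmap_injective p)

variable (m d l)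

def Sp (p : ZMod m × Bool) : Finset (Equiv.Perm (ZMod m × ZMod d)) :=
  univ.filter fun τ => (∀ t, (Lc m d l t).image τ = Lc m d l (rmap p t)) ∧
    (∀ t, (Mc m d l t).image τ = Mc m d l (pmap p t))

def Gc : Finset (Equiv.Perm (ZMod m × ZMod d)) :=
  univ.filter fun τ =>
    (univ.image (Bc m d l)).image (fun s => s.image τ) = univ.image (Bc m d l)

variable {m d l}

lemma mem_Sp {p : ZMod m × Bool} {τ : Equiv.Perm (ZMod m × ZMod d)} :
    τ ∈ Sp m d l p ↔ (∀ t, (Lc m d l t).image τ = Lc m d l (rmap p t)) ∧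
      (∀ t, (Mc m d l t).image τ = Mc m d l (pmap p t)) := by
  simp [Sp]

lemma mem_Gc {τ : Equiv.Perm (ZMod m × ZMod d)} :
    τ ∈ Gc m d l ↔
      (univ.image (Bc m d l)).image (fun s => s.image τ) = univ.image (Bc m d l) := by
  simp [Gc]

lemma Sp_subset_Gc (p : ZMod m × Bool) : Sp m d l p ⊆ Gc m d l := by
  intro τ hτ
  rw [mem_Sp] at hτ
  obtain ⟨hL, hM⟩ := hτ
  rw [mem_Gc]
  have hBt : ∀ t, (Bc m d l t).image ⇑τ = Bc m d l (pmap p t) := by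
    intro t
    rw [Bc_eq_union t, Finset.image_union, Finset.image_union, hL (t - 1), hM t, hL t,
      Bc_eq_union (pmap p t)]
    rcases p with ⟨a, ε⟩
    cases ε
    · rw [pmap_false, rmap_false, rmap_false, show a - (t - 1) - 1 = a - t by ring]
      ext x
      simp only [Finset.mem_union]
      tauto
    · rw [pmap_true, rmap_true, rmap_true, show a + (t - 1) = a + t - 1 by ring]
  rw [Finset.image_image]
  have : (fun s => Finset.image (⇑τ) s) ∘ Bc m d l = Bc m d l ∘ pmap p := by
    funext t
    exact hBt t
  rw [this, ← Finset.image_image, image_pmap_univ]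

lemma Gc_subset_biUnion (hm : 3 ≤ m) (hl1 : 1 ≤ l) (hld : l < d) :
    Gc m d l ⊆ univ.biUnion (Sp m d l) := by
  intro τ hτ
  rw [mem_Gc] at hτ
  have hB : ∀ t : ZMod m, ∃ t', (Bc m d l t).image ⇑τ = Bc m d l t' := by
    intro t
    have h1 : (Bc m d l t).image ⇑τ ∈ (univ.image (Bc m d l)).image (fun s => s.image ⇑τ) :=
      Finset.mem_image_of_mem _ (Finset.mem_image_of_mem _ (mem_univ t))
    rw [hτ] at h1
    obtain ⟨t', -, ht'⟩ := Finset.mem_image.mp h1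
    exact ⟨t', ht'.symm⟩
  choose π hπ using hB
  have hπinj : Function.Injective π := by
    intro t t' h
    apply Bc_injective hld
    apply Finset.image_injective τ.injective
    rw [hπ, hπ, h]
  have hadj : ∀ t : ZMod m, π (t + 1) = π t + 1 ∨ π t = π (t + 1) + 1 := by
    intro t
    refine Bc_inter_cases (d := d) (l := l) ?_ (fun h => ne_add_one hm t (hπinj h))
    rw [← hπ, ← hπ, ← Finset.image_inter _ _ τ.injective, Bc_inter_adj hm]
    exact (Lc_nonempty hl1 t).image ⇑τ
  have castval : ∀ t : ZMod m, ((t.val : ℕ) : ZMod m) = t := fun t => ZMod.natCast_rightInverse t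
  have key : (∀ t, π t = π 0 + t) ∨ (∀ t, π t = π 0 - t) := by
    rcases hadj 0 with h0 | h0
    · left
      have step : ∀ j : ℕ, π ((j : ZMod m) + 1) = π (j : ZMod m) + 1 := by
        intro j
        induction j with
        | zero => simpa using h0
        | succ j ih =>
          rcases hadj ((j + 1 : ℕ) : ZMod m) with h | h
          · exact h
          · exfalso
            have hc : ((j + 1 : ℕ) : ZMod m) = (j : ZMod m) + 1 := by push_cast; ring
            rw [hc] at h
            have h2 : π ((j : ZMod m) + 1 + 1) = π (j : ZMod m) := by
              linear_combination ih - h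
            exact two_ne_zero' hm (by linear_combination hπinj h2)
      have step' : ∀ t : ZMod m, π (t + 1) = π t + 1 := by
        intro t
        have := step t.val
        rwa [castval t] at this
      have tot : ∀ j : ℕ, π ((j : ℕ) : ZMod m) = π 0 + ((j : ℕ) : ZMod m) := by
        intro j
        induction j with
        | zero => simp
        | succ j ih =>
          have hc : ((j + 1 : ℕ) : ZMod m) = (j : ZMod m) + 1 := by push_cast; ring
          rw [hc, step', ih]
          ring
      intro t
      have := tot t.val
      rwa [castval t] at this
    · right
      have step : ∀ j : ℕ, π ((j : ZMod m) + 1) = π (j : ZMod m) - 1 := by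
        intro j
        induction j with
        | zero => simpa using (by linear_combination -h0 : π (0 + 1 : ZMod m) = π 0 - 1)
        | succ j ih =>
          rcases hadj ((j + 1 : ℕ) : ZMod m) with h | h
          · exfalso
            have hc : ((j + 1 : ℕ) : ZMod m) = (j : ZMod m) + 1 := by push_cast; ring
            rw [hc] at h
            have h2 : π ((j : ZMod m) + 1 + 1) = π (j : ZMod m) := by
              linear_combination h + ih
            exact two_ne_zero' hm (by linear_combination hπinj h2)
          · linear_combination -h
      have step' : ∀ t : ZMod m, π (t + 1) = π t - 1 := by
        intro t
        have := step t.val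
        rwa [castval t] at this
      have tot : ∀ j : ℕ, π ((j : ℕ) : ZMod m) = π 0 - ((j : ℕ) : ZMod m) := by
        intro j
        induction j with
        | zero => simp
        | succ j ih =>
          have hc : ((j + 1 : ℕ) : ZMod m) = (j : ZMod m) + 1 := by push_cast; ring
          rw [hc, step', ih]
          ring
      intro t
      have := tot t.val
      rwa [castval t] at this
  rw [Finset.mem_biUnion]
  rcases key with hk | hk
  · refine ⟨(π 0, true), mem_univ _, ?_⟩
    rw [mem_Sp]
    have hLim : ∀ t, (Lc m d l t).image ⇑τ = Lc m d l (rmap (π 0, true) t) := by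
      intro t
      rw [← Bc_inter_adj hm t, Finset.image_inter _ _ τ.injective, hπ, hπ, hk t, hk (t + 1),
        show π 0 + (t + 1) = (π 0 + t) + 1 by ring, Bc_inter_adj hm, rmap_true]
    refine ⟨hLim, fun t => ?_⟩
    rw [Mc_eq hm t, Finset.image_sdiff _ _ τ.injective, Finset.image_union, hπ, hLim (t - 1),
      hLim t, hk t, pmap_true, Mc_eq hm (π 0 + t), rmap_true, rmap_true,
      show π 0 + (t - 1) = π 0 + t - 1 by ring]
  · refine ⟨(π 0, false), mem_univ _, ?_⟩
    rw [mem_Sp]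
    have hLim : ∀ t, (Lc m d l t).image ⇑τ = Lc m d l (rmap (π 0, false) t) := by
      intro t
      rw [← Bc_inter_adj hm t, Finset.image_inter _ _ τ.injective, hπ, hπ, hk t, hk (t + 1),
        Finset.inter_comm, show π 0 - t = (π 0 - (t + 1)) + 1 by ring, Bc_inter_adj hm,
        rmap_false, show π 0 - (t + 1) = π 0 - t - 1 by ring]
    refine ⟨hLim, fun t => ?_⟩
    rw [Mc_eq hm t, Finset.image_sdiff _ _ τ.injective, Finset.image_union, hπ, hLim (t - 1),
      hLim t, hk t, pmap_false, Mc_eq hm (π 0 - t), rmap_false, rmap_false,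
      show π 0 - (t - 1) - 1 = π 0 - t by ring, Finset.union_comm (Lc m d l (π 0 - t))]

lemma rmap_injective (p : ZMod m × Bool) : Function.Injective (rmap p) := by
  rcases p with ⟨a, ε⟩
  intro t t' h
  cases ε <;> simp only [rmap, Bool.false_eq_true, if_true, if_false] at h
  · linear_combination -h
  · exact add_left_cancel h

lemma pmap_zero (t : ZMod m) : pmap ((0 : ZMod m), true) t = t := by simp [pmap]
lemma rmap_zero (t : ZMod m) : rmap ((0 : ZMod m), true) t = t := by simp [rmap]

lemma Sp_disjoint (hm : 3 ≤ m) (hl1 : 1 ≤ l) {p p' : ZMod m × Bool} (hne : p ≠ p') :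
    Disjoint (Sp m d l p) (Sp m d l p') := by
  rw [Finset.disjoint_left]
  intro τ h1 h2
  have e0 := ((mem_Sp.mp h1).1 0).symm.trans ((mem_Sp.mp h2).1 0)
  have e1 := ((mem_Sp.mp h1).1 1).symm.trans ((mem_Sp.mp h2).1 1)
  have f0 := Lc_injective hl1 e0
  have f1 := Lc_injective hl1 e1
  rcases p with ⟨a, ε⟩
  rcases p' with ⟨a', ε'⟩
  cases ε <;> cases ε' <;>
    simp only [rmap_true, rmap_false] at f0 f1
  · exact hne (by rw [show a = a' by linear_combination f0])
  · exact two_ne_zero' hm (by linear_combination f0 - f1)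
  · exact two_ne_zero' hm (by linear_combination f1 - f0)
  · exact hne (by rw [show a = a' by linear_combination f0])

variable (d l) in
def tauFun (p : ZMod m × Bool) : ZMod m × ZMod d → ZMod m × ZMod d :=
  fun x => (if x.2.val < l then rmap p (x.1 - 1) + 1 else pmap p x.1, x.2)

lemma tauFun_injective (p : ZMod m × Bool) : Function.Injective (tauFun d l p) := by
  rintro ⟨s, r⟩ ⟨s', r'⟩ h
  simp only [tauFun, Prod.mk.injEq] at h
  obtain ⟨h1, h2⟩ := h
  subst h2
  by_cases hc : r.val < l
  · rw [if_pos hc, if_pos hc] at h1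
    have := rmap_injective p (add_right_cancel h1)
    have : s = s' := by linear_combination this
    exact this ▸ rfl
  · rw [if_neg hc, if_neg hc] at h1
    exact (pmap_injective p h1) ▸ rfl

variable (d l) in
noncomputable def tauP (p : ZMod m × Bool) : Equiv.Perm (ZMod m × ZMod d) :=
  Equiv.ofBijective (tauFun d l p)
    (Finite.injective_iff_bijective.mp (tauFun_injective p))

lemma tauP_apply (p : ZMod m × Bool) (x : ZMod m × ZMod d) :
    tauP d l p x = tauFun d l p x := rfl

lemma tauP_mem_Sp (p : ZMod m × Bool) : tauP d l p ∈ Sp m d l p := by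
  rw [mem_Sp]
  constructor
  · intro t
    ext y
    simp only [Finset.mem_image, mem_Lc]
    constructor
    · rintro ⟨x, hx, rfl⟩
      simp only [tauP_apply, tauFun, if_pos hx.2]
      exact ⟨by rw [hx.1, add_sub_cancel_right], hx.2⟩
    · rintro ⟨h1, h2⟩
      refine ⟨(t + 1, y.2), ⟨rfl, h2⟩, ?_⟩
      simp only [tauP_apply, tauFun, if_pos h2, add_sub_cancel_right]
      exact Prod.ext h1.symm rfl
  · intro t
    ext y
    simp only [Finset.mem_image, mem_Mc]
    constructor
    · rintro ⟨x, hx, rfl⟩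
      simp only [tauP_apply, tauFun, if_neg (not_lt.mpr hx.2)]
      exact ⟨by rw [hx.1], hx.2⟩
    · rintro ⟨h1, h2⟩
      refine ⟨(t, y.2), ⟨rfl, h2⟩, ?_⟩
      simp only [tauP_apply, tauFun, if_neg (not_lt.mpr h2)]
      exact Prod.ext h1.symm rfl

lemma perm_image_mul (σ τ : Equiv.Perm (ZMod m × ZMod d)) (s : Finset (ZMod m × ZMod d)) :
    s.image ⇑(σ * τ) = (s.image ⇑τ).image ⇑σ := by
  rw [Finset.image_image]
  rfl

lemma card_Sp_eq (p : ZMod m × Bool) : (Sp m d l p).card = (Sp m d l (0, true)).card := by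
  have main : ∀ τ : Equiv.Perm (ZMod m × ZMod d),
      τ ∈ Sp m d l (0, true) ↔ tauP d l p * τ ∈ Sp m d l p := by
    intro τ
    obtain ⟨hL0, hM0⟩ := mem_Sp.mp (tauP_mem_Sp (d := d) (l := l) p)
    rw [mem_Sp, mem_Sp]
    constructor
    · rintro ⟨hL, hM⟩
      constructor
      · intro t
        rw [perm_image_mul, hL t, rmap_zero, hL0 t]
      · intro t
        rw [perm_image_mul, hM t, pmap_zero, hM0 t]
    · rintro ⟨hL, hM⟩
      constructor
      · intro t
        rw [rmap_zero]
        apply Finset.image_injective (tauP d l p).injective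
        rw [← perm_image_mul, hL t, hL0 t]
      · intro t
        rw [pmap_zero]
        apply Finset.image_injective (tauP d l p).injective
        rw [← perm_image_mul, hM t, hM0 t]
  have himg : Sp m d l p = (Sp m d l (0, true)).image (fun τ => tauP d l p * τ) := by
    ext τ'
    rw [Finset.mem_image]
    constructor
    · intro h
      refine ⟨(tauP d l p)⁻¹ * τ', ?_, by group⟩
      rw [main]
      rwa [show tauP d l p * ((tauP d l p)⁻¹ * τ') = τ' by group]
    · rintro ⟨τ, hτ, rfl⟩
      exact (main τ).mp hτ
  rw [himg, Finset.card_image_of_injective _ (mul_right_injective _)]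

variable (m d l) in
def cfun : ZMod m × ZMod d → ZMod m × Bool := fun x => (x.1, decide (x.2.val < l))

lemma Sp_zero_eq :
    Sp m d l (0, true)
      = univ.filter (fun τ : Equiv.Perm (ZMod m × ZMod d) =>
          ∀ x, cfun m d l (τ x) = cfun m d l x) := by
  ext τ
  rw [mem_Sp, Finset.mem_filter]
  simp only [Finset.mem_univ, true_and]
  constructor
  · rintro ⟨hL, hM⟩ x
    by_cases hc : x.2.val < l
    · have hx : x ∈ Lc m d l (x.1 - 1) := mem_Lc.mpr ⟨by ring, hc⟩
      have hτx : τ x ∈ Lc m d l (x.1 - 1) := by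
        rw [← rmap_zero (x.1 - 1), ← hL (x.1 - 1)]
        exact Finset.mem_image_of_mem _ hx
      rw [mem_Lc] at hτx
      have h1 : (τ x).1 = x.1 := hτx.1.trans (by ring)
      exact Prod.ext h1 (by simp [cfun, hτx.2, hc])
    · have hx : x ∈ Mc m d l x.1 := mem_Mc.mpr ⟨rfl, not_lt.mp hc⟩
      have hτx : τ x ∈ Mc m d l x.1 := by
        rw [← pmap_zero x.1, ← hM x.1]
        exact Finset.mem_image_of_mem _ hx
      rw [mem_Mc] at hτx
      exact Prod.ext hτx.1 (by simp [cfun, not_lt.mpr hτx.2, hc])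
  · intro hcond
    constructor
    · intro t
      rw [rmap_zero]
      apply Finset.eq_of_subset_of_card_le
      · intro y hy
        obtain ⟨x, hx, rfl⟩ := Finset.mem_image.mp hy
        rw [mem_Lc] at hx ⊢
        have hthis := hcond x
        simp only [cfun, Prod.mk.injEq] at hthis
        refine ⟨hthis.1.trans hx.1, ?_⟩
        have hd : decide ((τ x).2.val < l) = true := by
          rw [hthis.2]
          exact decide_eq_true hx.2
        exact of_decide_eq_true hd
      · rw [Finset.card_image_of_injective _ τ.injective]
    · intro t
      rw [pmap_zero]
      apply Finset.eq_of_subset_of_card_le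
      · intro y hy
        obtain ⟨x, hx, rfl⟩ := Finset.mem_image.mp hy
        rw [mem_Mc] at hx ⊢
        have hthis := hcond x
        simp only [cfun, Prod.mk.injEq] at hthis
        refine ⟨hthis.1.trans hx.1, ?_⟩
        have hd : decide ((τ x).2.val < l) = false := by
          rw [hthis.2]
          exact decide_eq_false (not_lt.mpr hx.2)
        exact not_lt.mp (of_decide_eq_false hd)
      · rw [Finset.card_image_of_injective _ τ.injective]

lemma Rl_card (hld : l ≤ d) : (Rl d l).card = l := by
  have himg : Rl d l = (Finset.range l).image (fun j : ℕ => (j : ZMod d)) := by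
    ext r
    simp only [Rl, Finset.mem_filter, Finset.mem_univ, true_and, Finset.mem_image,
      Finset.mem_range]
    constructor
    · intro h
      exact ⟨r.val, h, ZMod.natCast_rightInverse r⟩
    · rintro ⟨j, hj, rfl⟩
      rw [ZMod.val_cast_of_lt (lt_of_lt_of_le hj hld)]
      exact hj
  rw [himg, Finset.card_image_of_injOn, Finset.card_range]
  intro a ha b hb hab
  rw [Finset.mem_coe, Finset.mem_range] at ha hb
  have hv := congrArg ZMod.val hab
  rwa [ZMod.val_cast_of_lt (lt_of_lt_of_le ha hld),
    ZMod.val_cast_of_lt (lt_of_lt_of_le hb hld)] at hv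

lemma Rm_card (hld : l ≤ d) : (Rm d l).card = d - l := by
  have hsum := Finset.card_filter_add_card_filter_not
    (s := (univ : Finset (ZMod d))) (p := fun r => r.val < l)
  have hRm : (univ.filter fun r : ZMod d => ¬ r.val < l) = Rm d l := by
    ext r
    simp [Rm, not_lt]
  rw [hRm] at hsum
  have hRl : (univ.filter fun r : ZMod d => r.val < l) = Rl d l := rfl
  rw [hRl, Rl_card hld, Finset.card_univ, ZMod.card] at hsum
  omega

lemma fiber_card (hld : l < d) (y : ZMod m × Bool) :
    Fintype.card {x : ZMod m × ZMod d // cfun m d l x = y} = if y.2 then l else d - l := by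
  obtain ⟨t, b⟩ := y
  have e : {x : ZMod m × ZMod d // cfun m d l x = (t, b)}
      ≃ {r : ZMod d // decide (r.val < l) = b} := by
    refine ⟨fun x => ⟨x.1.2, congrArg Prod.snd x.2⟩, fun r => ⟨(t, r.1), ?_⟩, ?_, ?_⟩
    · have : cfun m d l (t, r.1) = (t, decide (r.1.val < l)) := rfl
      rw [this, r.2]
    · rintro ⟨⟨s, r⟩, hx⟩
      have hs : s = t := congrArg Prod.fst hx
      subst hs
      rfl
    · rintro ⟨r, hr⟩
      rfl
  rw [Fintype.card_congr e]
  cases b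
  · rw [Fintype.card_subtype]
    have hset : (univ.filter fun r : ZMod d => decide (r.val < l) = false) = Rm d l := by
      ext r
      simp [Rm, not_lt]
    rw [hset, Rm_card (le_of_lt hld)]
    simp
  · rw [Fintype.card_subtype]
    have hset : (univ.filter fun r : ZMod d => decide (r.val < l) = true) = Rl d l := by
      ext r
      simp [Rl]
    rw [hset, Rl_card (le_of_lt hld)]
    simp

lemma card_Sp_zero (hld : l < d) :
    (Sp m d l (0, true)).card = (l.factorial * (d - l).factorial) ^ m := by
  rw [Sp_zero_eq, ← Fintype.card_subtype, Ham2.card_perm_fiber (cfun m d l)]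
  rw [Fintype.prod_prod_type]
  have hin : ∀ t : ZMod m,
      (∏ b : Bool, (Fintype.card {x : ZMod m × ZMod d // cfun m d l x = (t, b)}).factorial)
        = l.factorial * (d - l).factorial := by
    intro t
    rw [Fintype.prod_bool, fiber_card hld (t, true), fiber_card hld (t, false)]
    simp [mul_comm]
  rw [Finset.prod_congr rfl (fun t _ => hin t), Finset.prod_const, Finset.card_univ, ZMod.card]

lemma card_Gc (hm : 3 ≤ m) (hl1 : 1 ≤ l) (hld : l < d) :
    (Gc m d l).card = (2 * m) * (l.factorial * (d - l).factorial) ^ m := by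
  have heq : Gc m d l = univ.biUnion (Sp m d l) :=
    subset_antisymm (Gc_subset_biUnion hm hl1 hld)
      (Finset.biUnion_subset.mpr fun p _ => Sp_subset_Gc p)
  rw [heq, Finset.card_biUnion (fun p _ p' _ h => Sp_disjoint hm hl1 h)]
  have hterm : ∀ p ∈ (univ : Finset (ZMod m × Bool)),
      (Sp m d l p).card = (l.factorial * (d - l).factorial) ^ m :=
    fun p _ => (card_Sp_eq p).trans (card_Sp_zero hld)
  rw [Finset.sum_congr rfl hterm, Finset.sum_const, smul_eq_mul, Finset.card_univ,
    Fintype.card_prod, ZMod.card, Fintype.card_bool]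
  ring

end dihedral
end HamCount

namespace HamTransfer
open Finset Equiv Function HamCount

def gfun (n m d : ℕ) [NeZero m] [NeZero d] : ZMod m × ZMod d → ZMod n :=
  fun x => ((x.1.val * d + x.2.val : ℕ) : ZMod n)

variable {n m d l : ℕ} [NeZero n] [NeZero m] [NeZero d]

lemma gval (hn : n = m * d) (x : ZMod m × ZMod d) :
    (gfun n m d x).val = x.1.val * d + x.2.val := by
  apply ZMod.val_cast_of_lt
  have h1 : x.1.val < m := ZMod.val_lt x.1
  have h2 : x.2.val < d := ZMod.val_lt x.2
  have h3 : (x.1.val + 1) * d ≤ m * d := Nat.mul_le_mul_right d h1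
  have h4 : (x.1.val + 1) * d = x.1.val * d + d := by ring
  omega

lemma g_injective (hn : n = m * d) : Function.Injective (gfun n m d) := by
  intro x y h
  have hv := congrArg ZMod.val h
  rw [gval hn, gval hn] at hv
  have hv' : d * x.1.val + x.2.val = d * y.1.val + y.2.val := by
    rw [mul_comm d, mul_comm d]
    exact hv
  have h2 : x.2.val = y.2.val := by
    have e1 := congrArg (fun z => z % d) hv'
    simp only [Nat.mul_add_mod] at e1
    rwa [Nat.mod_eq_of_lt (ZMod.val_lt x.2), Nat.mod_eq_of_lt (ZMod.val_lt y.2)] at e1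
  have hd0 : 0 < d := Nat.pos_of_ne_zero (NeZero.ne d)
  have h1 : x.1.val = y.1.val := by
    have hx : x.1.val * d = y.1.val * d := by omega
    exact Nat.eq_of_mul_eq_mul_right hd0 hx
  exact Prod.ext (ZMod.val_injective m h1) (ZMod.val_injective d h2)

noncomputable def gEquiv (n m d : ℕ) [NeZero n] [NeZero m] [NeZero d] (hn : n = m * d) :
    (ZMod m × ZMod d) ≃ ZMod n :=
  Equiv.ofBijective (gfun n m d)
    ((Fintype.bijective_iff_injective_and_card _).mpr
      ⟨g_injective hn, by simp [ZMod.card, Fintype.card_prod, hn]⟩)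

lemma gEquiv_coe (hn : n = m * d) : ⇑(gEquiv n m d hn) = gfun n m d := rfl

lemma bridge (hn : n = m * d) (i j : ℕ) (hj : j < d) :
    ((i * d + j : ℕ) : ZMod n) = gfun n m d ((i : ZMod m), (j : ZMod d)) := by
  unfold gfun
  have hv1 : ((i : ZMod m)).val = i % m := ZMod.val_natCast m i
  have hv2 : ((j : ZMod d)).val = j := by
    rw [ZMod.val_natCast, Nat.mod_eq_of_lt hj]
  rw [hv1, hv2]
  have hsplit : i * d + j = (i / m) * n + ((i % m) * d + j) := by
    conv_lhs => rw [← Nat.div_add_mod i m]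
    rw [hn]
    ring
  rw [hsplit]
  push_cast
  rw [ZMod.natCast_self]
  ring

lemma B_transfer (hn : n = m * d) (hld : l ≤ d) (i : ℕ) :
    (Finset.range (d + l)).image (fun j => ((i * d + j : ℕ) : ZMod n))
      = (Bc m d l (i : ZMod m)).image (gfun n m d) := by
  ext y
  simp only [Finset.mem_image, Finset.mem_range]
  constructor
  · rintro ⟨j, hj, rfl⟩
    by_cases hjd : j < d
    · exact ⟨((i : ZMod m), (j : ZMod d)), mem_Bc.mpr (Or.inl rfl), (bridge hn i j hjd).symm⟩
    · have hj0 : j - d < l := by omega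
      have hstep : (i + 1) * d = i * d + d := by ring
      have hsplit : i * d + j = (i + 1) * d + (j - d) := by omega
      refine ⟨(((i + 1 : ℕ) : ZMod m), ((j - d : ℕ) : ZMod d)), ?_, ?_⟩
      · rw [mem_Bc]
        right
        constructor
        · push_cast
          ring
        · rw [ZMod.val_natCast, Nat.mod_eq_of_lt (lt_of_lt_of_le hj0 hld)]
          exact hj0
      · rw [← bridge hn (i + 1) (j - d) (lt_of_lt_of_le hj0 hld), hsplit]
  · rintro ⟨⟨z1, z2⟩, hz, rfl⟩
    rw [mem_Bc] at hz
    dsimp only at hz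
    have hzv : ((z2.val : ℕ) : ZMod d) = z2 := ZMod.natCast_rightInverse z2
    rcases hz with h1 | ⟨h1, h2⟩
    · refine ⟨z2.val, by have := ZMod.val_lt z2; omega, ?_⟩
      rw [bridge hn i z2.val (ZMod.val_lt z2), hzv]
      rw [← h1]
    · refine ⟨d + z2.val, by have := ZMod.val_lt z2; omega, ?_⟩
      have hsplit : i * d + (d + z2.val) = (i + 1) * d + z2.val := by
        have hstep : (i + 1) * d = i * d + d := by ring
        omega
      rw [hsplit, bridge hn (i + 1) z2.val (ZMod.val_lt z2), hzv]
      have hz1 : ((i + 1 : ℕ) : ZMod m) = z1 := by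
        rw [h1]
        push_cast
        ring
      rw [hz1]

lemma range_cast_univ : (Finset.range m).image (fun i : ℕ => (i : ZMod m)) = univ := by
  ext t
  simp only [Finset.mem_image, Finset.mem_range, Finset.mem_univ, iff_true]
  exact ⟨t.val, ZMod.val_lt t, ZMod.natCast_rightInverse t⟩

def EEn (n m d l : ℕ) [NeZero m] [NeZero d] : Finset (Finset (ZMod n)) :=
  ((univ : Finset (ZMod m)).image (Bc m d l)).image (fun s => s.image (gfun n m d))

lemma E_transfer (hn : n = m * d) (hld : l ≤ d) :
    (Finset.range m).image
        (fun i => (Finset.range (d + l)).image (fun j => ((i * d + j : ℕ) : ZMod n)))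
      = EEn n m d l := by
  have h1 : (Finset.range m).image
      (fun i => (Finset.range (d + l)).image (fun j => ((i * d + j : ℕ) : ZMod n)))
      = (Finset.range m).image (fun i : ℕ => (Bc m d l (i : ZMod m)).image (gfun n m d)) := by
    apply Finset.image_congr
    intro i _
    exact B_transfer hn hld i
  rw [h1, EEn]
  rw [show (fun i : ℕ => (Bc m d l ((i : ℕ) : ZMod m)).image (gfun n m d))
      = (fun s : Finset (ZMod m × ZMod d) => s.image (gfun n m d)) ∘ (Bc m d l) ∘
        (fun i : ℕ => (i : ZMod m)) from rfl]
  rw [← Finset.image_image, ← Finset.image_image, range_cast_univ]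

def Gn (n m d l : ℕ) [NeZero n] [NeZero m] [NeZero d] : Finset (Equiv.Perm (ZMod n)) :=
  univ.filter fun σ => (EEn n m d l).image (fun s => s.image σ) = EEn n m d l

lemma card_Gn (hn : n = m * d) (hm : 3 ≤ m) (hl1 : 1 ≤ l) (hld : l < d) :
    (Gn n m d l).card = (2 * m) * (l.factorial * (d - l).factorial) ^ m := by
  classical
  have hkey : ∀ (τ : Equiv.Perm (ZMod m × ZMod d)) (S : Finset (ZMod m × ZMod d)),
      (S.image (gfun n m d)).image ⇑((gEquiv n m d hn).permCongr τ)
        = (S.image ⇑τ).image (gfun n m d) := by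
    intro τ S
    rw [Finset.image_image, Finset.image_image]
    apply Finset.image_congr
    intro z _
    show (gEquiv n m d hn).permCongr τ (gfun n m d z) = gfun n m d (τ z)
    rw [Equiv.permCongr_apply, ← gEquiv_coe hn, Equiv.symm_apply_apply]
  have hcond : ∀ τ : Equiv.Perm (ZMod m × ZMod d),
      ((EEn n m d l).image (fun s => s.image ⇑((gEquiv n m d hn).permCongr τ)) = EEn n m d l)
        ↔ τ ∈ Gc m d l := by
    intro τ
    rw [mem_Gc, EEn, Finset.image_image]
    have h2 : (fun s : Finset (ZMod m × ZMod d) =>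
          Finset.image (⇑((gEquiv n m d hn).permCongr τ)) (s.image (gfun n m d)))
        = (fun s : Finset (ZMod m × ZMod d) => (s.image ⇑τ).image (gfun n m d)) := by
      funext S
      exact hkey τ S
    rw [show ((fun s : Finset (ZMod n) => s.image ⇑((gEquiv n m d hn).permCongr τ)) ∘
        (fun s : Finset (ZMod m × ZMod d) => s.image (gfun n m d)))
        = fun s : Finset (ZMod m × ZMod d) =>
            Finset.image (⇑((gEquiv n m d hn).permCongr τ)) (s.image (gfun n m d)) from rfl]
    rw [h2]
    have h3 : (fun s : Finset (ZMod m × ZMod d) => (s.image ⇑τ).image (gfun n m d))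
        = (fun s : Finset (ZMod m × ZMod d) => s.image (gfun n m d)) ∘
          (fun s : Finset (ZMod m × ZMod d) => s.image ⇑τ) := rfl
    rw [h3, ← Finset.image_image (g := fun s : Finset (ZMod m × ZMod d) =>
      s.image (gfun n m d))]
    constructor
    · intro h
      exact Finset.image_injective (Finset.image_injective (g_injective hn)) h
    · intro h
      rw [h]
  have himg : Gn n m d l = (Gc m d l).image (fun τ => (gEquiv n m d hn).permCongr τ) := by
    ext σ
    rw [Gn, Finset.mem_filter, Finset.mem_image]
    constructor
    · rintro ⟨-, h⟩
      refine ⟨((gEquiv n m d hn).permCongr).symm σ, ?_, Equiv.apply_symm_apply _ σ⟩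
      rw [← hcond]
      rwa [Equiv.apply_symm_apply]
    · rintro ⟨τ, hτ, rfl⟩
      exact ⟨Finset.mem_univ _, (hcond τ).mpr hτ⟩
  rw [himg, Finset.card_image_of_injective _ (Equiv.injective _), card_Gc hm hl1 hld]

noncomputable def Psi (n m d l : ℕ) [NeZero m] [NeZero d] (f : ZMod n → Fin n) :
    Finset (Finset (Fin n)) :=
  (EEn n m d l).image (fun s => s.image f)

lemma Psi_trans (σ : Equiv.Perm (ZMod n)) (e : ZMod n ≃ Fin n) :
    Psi n m d l ⇑(σ.trans e) = ((EEn n m d l).image (fun s => s.image ⇑σ)).image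
      (fun s => s.image ⇑e) := by
  rw [Psi, Finset.image_image]
  apply Finset.image_congr
  intro s _
  show s.image ⇑(σ.trans e) = (s.image ⇑σ).image ⇑e
  rw [Finset.image_image]
  rfl

lemma fiber_eq (e : ZMod n ≃ Fin n) :
    (univ.filter fun f : ZMod n ≃ Fin n => Psi n m d l ⇑f = Psi n m d l ⇑e)
      = (Gn n m d l).image (fun σ => σ.trans e) := by
  classical
  ext f
  rw [Finset.mem_filter, Finset.mem_image]
  constructor
  · rintro ⟨-, hf⟩
    refine ⟨f.trans e.symm, ?_, by ext x; simp⟩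
    rw [Gn, Finset.mem_filter]
    refine ⟨Finset.mem_univ _, ?_⟩
    apply Finset.image_injective (Finset.image_injective e.injective)
    have h1 : ((f.trans e.symm).trans e) = f := by ext x; simp
    have h2 := Psi_trans (n := n) (m := m) (d := d) (l := l) (f.trans e.symm) e
    rw [h1, hf] at h2
    rw [Psi] at h2
    exact h2.symm
  · rintro ⟨σ, hσ, rfl⟩
    rw [Gn, Finset.mem_filter] at hσ
    refine ⟨Finset.mem_univ _, ?_⟩
    rw [Psi_trans, hσ.2]
    rfl

lemma fiberPsi_card (hn : n = m * d) (hm : 3 ≤ m) (hl1 : 1 ≤ l) (hld : l < d)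
    (e : ZMod n ≃ Fin n) :
    (univ.filter fun f : ZMod n ≃ Fin n => Psi n m d l ⇑f = Psi n m d l ⇑e).card
      = (2 * m) * (l.factorial * (d - l).factorial) ^ m := by
  rw [fiber_eq e, Finset.card_image_of_injective, card_Gn hn hm hl1 hld]
  intro σ σ' h
  ext x
  have := congrArg (fun q : ZMod n ≃ Fin n => e.symm (q x)) h
  simpa using this

lemma master_count (hn : n = m * d) (hm : 3 ≤ m) (hl1 : 1 ≤ l) (hld : l < d) :
    n.factorial = ((univ : Finset (ZMod n ≃ Fin n)).image
      (fun f : ZMod n ≃ Fin n => Psi n m d l ⇑f)).card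
      * ((2 * m) * (l.factorial * (d - l).factorial) ^ m) := by
  classical
  have hcard : (univ : Finset (ZMod n ≃ Fin n)).card = n.factorial := by
    rw [Finset.card_univ]
    have e0 : ZMod n ≃ Fin n := (Fintype.equivFin (ZMod n)).trans (finCongr (ZMod.card n))
    rw [Fintype.card_equiv e0, ZMod.card]
  rw [← hcard, Finset.card_eq_sum_card_image (fun f : ZMod n ≃ Fin n => Psi n m d l ⇑f) univ]
  have hsum : ∀ C ∈ Finset.image (fun f : ZMod n ≃ Fin n => Psi n m d l ⇑f) univ,
      (univ.filter fun f : ZMod n ≃ Fin n => Psi n m d l ⇑f = C).card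
        = (2 * m) * (l.factorial * (d - l).factorial) ^ m := by
    intro C hC
    obtain ⟨e, -, rfl⟩ := Finset.mem_image.mp hC
    exact fiberPsi_card hn hm hl1 hld e
  rw [Finset.sum_congr rfl hsum, Finset.sum_const, smul_eq_mul]

end HamTransfer

namespace HamCount
variable {m d l : ℕ} [NeZero m] [NeZero d]

lemma card_Bc (hm : 3 ≤ m) (hld : l ≤ d) (t : ZMod m) : (Bc m d l t).card = d + l := by
  rw [Bc, Finset.card_union_of_disjoint, Finset.card_product, Finset.card_product,
    Finset.card_singleton, Finset.card_univ, ZMod.card, Rl_card hld, one_mul,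
    Finset.card_singleton, one_mul]
  rw [Finset.disjoint_left]
  intro x hx hx'
  rw [Finset.mem_product, Finset.mem_singleton] at hx hx'
  exact ne_add_one hm t (hx.1.symm.trans hx'.1)

end HamCount

namespace HamTransfer
open Finset Equiv Function HamCount
variable {n m d l : ℕ} [NeZero n] [NeZero m] [NeZero d]

lemma card_EEn (hn : n = m * d) (hm : 3 ≤ m) (hl1 : 1 ≤ l) (hld : l < d) :
    (EEn n m d l).card = m := by
  rw [EEn, Finset.card_image_of_injective _ (Finset.image_injective (g_injective hn)),
    Finset.card_image_of_injective _ (Bc_injective hld), Finset.card_univ, ZMod.card]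

lemma EEn_mem_card (hn : n = m * d) (hm : 3 ≤ m) (hld : l ≤ d) {s : Finset (ZMod n)}
    (hs : s ∈ EEn n m d l) : s.card = d + l := by
  rw [EEn, Finset.mem_image] at hs
  obtain ⟨S, hS, rfl⟩ := hs
  obtain ⟨t, -, rfl⟩ := Finset.mem_image.mp hS
  rw [Finset.card_image_of_injective _ (g_injective hn), card_Bc hm hld]

lemma Psi_raw (hn : n = m * d) (hld : l ≤ d) (f : ZMod n → Fin n) :
    Psi n m d l f = (Finset.range m).image (fun i =>
      (Finset.range (d + l)).image (fun j => f ((i * d + j : ℕ) : ZMod n))) := by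
  rw [Psi, ← E_transfer hn hld, Finset.image_image]
  apply Finset.image_congr
  intro i _
  show ((Finset.range (d + l)).image (fun j => ((i * d + j : ℕ) : ZMod n))).image f = _
  rw [Finset.image_image]
  rfl

end HamTransfer

/-- `C` is a Hamilton `l`-cycle of the `k`-uniform hypergraph `H` on vertex set `Fin n`. -/
def IsHamiltonCycle (n k l : ℕ) (H C : Finset (Finset (Fin n))) : Prop :=
  C ⊆ H ∧ C.card = n / (k - l) ∧
    ∃ v : ZMod n → Fin n, Function.Bijective v ∧
      C = (Finset.range (n / (k - l))).image (fun i =>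
        (Finset.range k).image (fun j => v ((i * (k - l) + j : ℕ) : ZMod n)))

theorem count_hamilton_cycles_complete (n k l : ℕ) (hl1 : 1 ≤ l) (hl2 : 2 * l < k)
    (hdvd : (k - l) ∣ n) (hn : 3 * (k - l) ≤ n) :
    ({C : Finset (Finset (Fin n)) |
        IsHamiltonCycle n k l ((Finset.univ : Finset (Fin n)).powersetCard k) C}.ncard : ℝ)
      = ((n - 1).factorial : ℝ) * ((k - l : ℕ) : ℝ) / 2 *
        ((((l.factorial * (k - 2 * l).factorial : ℕ) : ℝ)) ^ (n / (k - l)))⁻¹ := by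
  classical
  open Finset HamTransfer in
  have hd0 : 0 < k - l := by omega
  set d := k - l with hdd
  set m := n / d with hmm
  have hk : k = d + l := by omega
  have hld : l < d := by omega
  have hn' : n = m * d := by
    rw [hmm]
    exact (Nat.div_mul_cancel hdvd).symm
  have hm3 : 3 ≤ m := by
    rw [hmm]
    exact (Nat.le_div_iff_mul_le hd0).mpr (by omega)
  haveI : NeZero d := ⟨by omega⟩
  haveI : NeZero m := ⟨by omega⟩
  haveI : NeZero n := ⟨by
    have : 0 < m * d := Nat.mul_pos (by omega) hd0
    omega⟩
  have h2l : k - 2 * l = d - l := by omega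
  have hset : {C : Finset (Finset (Fin n)) |
      IsHamiltonCycle n k l ((Finset.univ : Finset (Fin n)).powersetCard k) C}
      = ↑((univ : Finset (ZMod n ≃ Fin n)).image
          (fun f : ZMod n ≃ Fin n => Psi n m d l ⇑f)) := by
    ext C
    rw [Set.mem_setOf_eq, Finset.mem_coe, Finset.mem_image]
    simp only [IsHamiltonCycle]
    constructor
    · rintro ⟨-, -, v, hbij, hform⟩
      refine ⟨Equiv.ofBijective v hbij, Finset.mem_univ _, ?_⟩
      rw [Psi_raw hn' (le_of_lt hld)]
      rw [← hdd, ← hmm, hk] at hform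
      exact hform.symm
    · rintro ⟨e, -, rfl⟩
      refine ⟨?_, ?_, ⇑e, e.bijective, ?_⟩
      · intro s hs
        rw [Psi, Finset.mem_image] at hs
        obtain ⟨sb, hsb, rfl⟩ := hs
        rw [Finset.mem_powersetCard]
        refine ⟨Finset.subset_univ _, ?_⟩
        rw [Finset.card_image_of_injective _ e.injective,
          EEn_mem_card hn' hm3 (le_of_lt hld) hsb, hk]
      · rw [Psi, Finset.card_image_of_injective _
          (Finset.image_injective e.injective), card_EEn hn' hm3 hl1 hld, ← hdd, ← hmm]
      · rw [Psi_raw hn' (le_of_lt hld), ← hdd, ← hmm, hk]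
  rw [hset, Set.ncard_coe_finset]
  have hcount := master_count (n := n) (m := m) (d := d) (l := l) hn' hm3 hl1 hld
  set N := ((univ : Finset (ZMod n ≃ Fin n)).image
      (fun f : ZMod n ≃ Fin n => Psi n m d l ⇑f)).card with hN
  rw [h2l]
  set Q : ℕ := l.factorial * (d - l).factorial with hQ
  have hQ0 : (0 : ℝ) < (Q : ℝ) := by
    have : 0 < Q := Nat.mul_pos (Nat.factorial_pos l) (Nat.factorial_pos (d - l))
    exact_mod_cast this
  have hm0 : (0 : ℝ) < (m : ℝ) := by
    have : 0 < m := by omega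
    exact_mod_cast this
  have hn0 : 0 < n := Nat.pos_of_ne_zero (NeZero.ne n)
  have hfact : (n.factorial : ℝ) = (m : ℝ) * (d : ℝ) * ((n - 1).factorial : ℝ) := by
    have h1 : n * (n - 1).factorial = n.factorial := Nat.mul_factorial_pred hn0.ne'
    have h2 : (m * d) * (n - 1).factorial = n.factorial := by rw [← hn']; exact h1
    exact_mod_cast h2.symm
  have key : (N : ℝ) * (2 * (m : ℝ) * (Q : ℝ) ^ m) = (n.factorial : ℝ) := by
    exact_mod_cast (congrArg (Nat.cast (R := ℝ)) hcount).symm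
  have hQm : ((Q : ℝ)) ^ m ≠ 0 := by positivity
  have h2Q : (2 : ℝ) * (m : ℝ) * (Q : ℝ) ^ m ≠ 0 := by positivity
  have hNval : (N : ℝ)
      = ((m : ℝ) * (d : ℝ) * ((n - 1).factorial : ℝ)) / (2 * (m : ℝ) * (Q : ℝ) ^ m) := by
    rw [eq_div_iff h2Q]
    rw [hfact] at key
    exact key
  rw [hNval]
  field_simp
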